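/- Suppose Assumption 1 holds with constant ε ≥ 0, Assumption 3 holds with constant γ > 0, Assumption 4 holds, Condition 1 holds, and Condition 2 is violated: there exists j ∈ S such that H[Y | X_{{j}}] = H[Y | (ρ(Z), X_{{j}})] for every environment-partition function ρ. If ε < γ/(2(1 + 2λ)), then L̂(V ∪ {j}) < L̂(V); in particular there exists a feature mask Φ′ ≠ V with L̂(Φ′) < L̂(V), so the ZIN objective does not select exactly the invariant features. -/

import Mathlib

open MeasureTheory ProbabilityTheory
open scoped ENNReal

/-- `- log p` for `p ∈ [0, ∞]`, valued in `[0, ∞]`, with `- log 0 = ∞`. -/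
noncomputable def negLog (p : ℝ≥0∞) : ℝ≥0∞ :=
  if p = 0 then ⊤ else ENNReal.ofReal (-Real.log p.toReal)

/-- Conditional Shannon entropy `H[Y | W]` (natural logarithm) of a finite-valued random
variable `Y` given a finite-valued random variable `W`, under the measure `μ`. -/
noncomputable def condEnt {Ω 𝒴 𝒲 : Type*} [MeasurableSpace Ω] (μ : Measure Ω)
    [Fintype 𝒴] [Fintype 𝒲] (Y : Ω → 𝒴) (W : Ω → 𝒲) : ℝ :=
  ∑ w : 𝒲, ∑ y : 𝒴,
    -((μ {ω | Y ω = y ∧ W ω = w}).toReal *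
      Real.log ((μ {ω | Y ω = y ∧ W ω = w}).toReal / (μ {ω | W ω = w}).toReal))

/-- Shannon entropy `H[Y]` (natural logarithm) of a finite-valued random variable `Y`. -/
noncomputable def shEnt {Ω 𝒴 : Type*} [MeasurableSpace Ω] (μ : Measure Ω)
    [Fintype 𝒴] (Y : Ω → 𝒴) : ℝ :=
  ∑ y : 𝒴, -((μ {ω | Y ω = y}).toReal * Real.log (μ {ω | Y ω = y}).toReal)

/-- Expected cross-entropy risk `E[- log f(X)(Y)]` of a probabilistic classifier `f`,
valued in `[0, ∞]`. -/
noncomputable def ceRisk {Ω α 𝒴 : Type*} [MeasurableSpace Ω] (μ : Measure Ω)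
    [Fintype α] [Fintype 𝒴] (X : Ω → α) (Y : Ω → 𝒴) (f : α → PMF 𝒴) : ℝ≥0∞ :=
  ∑ x : α, ∑ y : 𝒴, μ {ω | X ω = x ∧ Y ω = y} * negLog (f x y)

/-- Environment-wise weighted cross-entropy risk `E[1{ρ(Z) = k} · (- log f(X)(Y))]`. -/
noncomputable def ceRiskW {Ω α 𝒴 𝒵 : Type*} [MeasurableSpace Ω] (μ : Measure Ω)
    [Fintype α] [Fintype 𝒴] {K : ℕ}
    (X : Ω → α) (Y : Ω → 𝒴) (Z : Ω → 𝒵) (ρ : 𝒵 → Fin K) (k : Fin K)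
    (f : α → PMF 𝒴) : ℝ≥0∞ :=
  ∑ x : α, ∑ y : 𝒴, μ {ω | ρ (Z ω) = k ∧ X ω = x ∧ Y ω = y} * negLog (f x y)

/-- The masked feature tuple `X_Φ = (X^j)_{j ∈ Φ}` of a feature vector `X`. -/
def maskFun {Ω 𝒳 : Type*} {d : ℕ} (X : Ω → Fin d → 𝒳) (Φ : Finset (Fin d)) :
    Ω → ({ j : Fin d // j ∈ Φ } → 𝒳) :=
  fun ω j => X ω j.1

/-- The ZIN objective `L̂(Φ)`: infimum over classifiers `f ∈ 𝓕 Φ` of the supremum over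
environment-partition functions `ρ : 𝒵 → Fin K` of the cross-entropy risk plus `λ` times the
invariance penalty. -/
noncomputable def Lhat {Ω 𝒳 𝒴 𝒵 : Type*} [MeasurableSpace Ω] (μ : Measure Ω)
    [Fintype 𝒳] [Fintype 𝒴] (K : ℕ) {d : ℕ}
    (X : Ω → Fin d → 𝒳) (Y : Ω → 𝒴) (Z : Ω → 𝒵)
    (𝓕 : Finset (Fin d) → Set ((Fin d → 𝒳) → PMF 𝒴)) (lam : ℝ)
    (Φ : Finset (Fin d)) : ℝ≥0∞ :=
  ⨅ f ∈ 𝓕 Φ, ⨆ ρ : 𝒵 → Fin K,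
    ceRisk μ X Y f + ENNReal.ofReal lam *
      ∑ k : Fin K, (ceRiskW μ X Y Z ρ k f - ⨅ g ∈ 𝓕 Φ, ceRiskW μ X Y Z ρ k g)


set_option linter.unusedSectionVars false
attribute [local instance] Classical.propDecidable

lemma measure_eq_sum_fiber {Ω β : Type*} [MeasurableSpace Ω] (μ : Measure Ω) [Fintype β]
    (W : Ω → β) (hW : ∀ b, MeasurableSet {ω | W ω = b}) {A : Set Ω} (hA : MeasurableSet A) :
    μ A = ∑ b : β, μ ({ω | W ω = b} ∩ A) := by
  conv_lhs => rw [show A = ⋃ b : β, ({ω | W ω = b} ∩ A) by ext ω; simp]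
  rw [measure_iUnion ?_ (fun b => (hW b).inter hA), tsum_fintype]
  intro b b' hbb'
  simp only [Function.onFun, Set.disjoint_left]
  rintro ω ⟨h1, -⟩ ⟨h2, -⟩
  exact hbb' (h1.symm.trans h2)

lemma cell_real {𝒴 : Type*} [Fintype 𝒴] (P : 𝒴 → ℝ) (f : 𝒴 → ℝ)
    (hP : ∀ y, 0 ≤ P y) (hf0 : ∀ y, 0 ≤ f y) (hfs : ∑ y, f y ≤ 1)
    (hpf : ∀ y, 0 < P y → 0 < f y) :
    ∑ y, -(P y * Real.log (P y / ∑ y', P y')) ≤ ∑ y, P y * (-Real.log (f y)) := by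
  set Q := ∑ y', P y' with hQdef
  have hQ : 0 ≤ Q := Finset.sum_nonneg fun _ _ => hP _
  have key : ∀ y, -(P y * Real.log (P y / Q)) ≤ P y * (-Real.log (f y)) + (Q * f y - P y) := by
    intro y
    rcases eq_or_lt_of_le (hP y) with h0 | hpos
    · rw [← h0]
      have : 0 ≤ Q * f y := mul_nonneg hQ (hf0 y)
      simp; linarith
    · have hfy := hpf y hpos
      have hQpos : 0 < Q :=
        lt_of_lt_of_le hpos (Finset.single_le_sum (f := P) (fun i _ => hP i) (Finset.mem_univ y))
      have hx : (0:ℝ) < Q * f y / P y := by positivity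
      have hlog : Real.log (Q * f y / P y) ≤ Q * f y / P y - 1 :=
        Real.log_le_sub_one_of_pos hx
      have hexp : Real.log (Q * f y / P y) = Real.log Q + Real.log (f y) - Real.log (P y) := by
        rw [Real.log_div (by positivity) hpos.ne', Real.log_mul hQpos.ne' hfy.ne']
      have hexp2 : Real.log (P y / Q) = Real.log (P y) - Real.log Q :=
        Real.log_div hpos.ne' hQpos.ne'
      have hmul := mul_le_mul_of_nonneg_left hlog hpos.le
      have hfield : P y * (Q * f y / P y - 1) = Q * f y - P y := by
        field_simp
      rw [hexp] at hmul
      rw [hexp2]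
      nlinarith
  calc ∑ y, -(P y * Real.log (P y / Q))
      ≤ ∑ y, (P y * (-Real.log (f y)) + (Q * f y - P y)) := Finset.sum_le_sum fun y _ => key y
    _ = (∑ y, P y * (-Real.log (f y))) + (Q * (∑ y, f y) - Q) := by
        rw [Finset.sum_add_distrib, Finset.sum_sub_distrib, ← Finset.mul_sum, hQdef]
    _ ≤ ∑ y, P y * (-Real.log (f y)) := by nlinarith [mul_le_mul_of_nonneg_left hfs hQ]

/-- Each term of `condEnt` is nonnegative. -/
lemma condEnt_term_nonneg {p q : ℝ} (hp : 0 ≤ p) (hpq : p ≤ q) :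
    0 ≤ -(p * Real.log (p / q)) := by
  rcases eq_or_lt_of_le hp with h0 | hpos
  · simp [← h0]
  · have hq : 0 < q := lt_of_lt_of_le hpos hpq
    have : p / q ≤ 1 := (div_le_one hq).2 hpq
    have hlog : Real.log (p / q) ≤ 0 := Real.log_nonpos (by positivity) this
    nlinarith

/-- Gibbs inequality over a finite family of measurable cells. -/
lemma gibbs_cells {Ω 𝒴 ι : Type*} [MeasurableSpace Ω] (μ : Measure Ω) [IsFiniteMeasure μ]
    [Fintype 𝒴] [Fintype ι] (Y : Ω → 𝒴)
    (hY : ∀ y, MeasurableSet {ω | Y ω = y})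
    (C : ι → Set Ω) (hC : ∀ i, MeasurableSet (C i)) (F : ι → PMF 𝒴) :
    ENNReal.ofReal (∑ i, ∑ y,
      -((μ ({ω | Y ω = y} ∩ C i)).toReal *
        Real.log ((μ ({ω | Y ω = y} ∩ C i)).toReal / (μ (C i)).toReal))) ≤
    ∑ i, ∑ y, μ ({ω | Y ω = y} ∩ C i) * negLog (F i y) := by
  have hterm_nonneg : ∀ i y, 0 ≤ -((μ ({ω | Y ω = y} ∩ C i)).toReal *
      Real.log ((μ ({ω | Y ω = y} ∩ C i)).toReal / (μ (C i)).toReal)) := by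
    intro i y
    exact condEnt_term_nonneg ENNReal.toReal_nonneg
      (ENNReal.toReal_mono (measure_ne_top μ _) (measure_mono Set.inter_subset_right))
  rw [ENNReal.ofReal_sum_of_nonneg (fun i _ => Finset.sum_nonneg fun y _ => hterm_nonneg i y)]
  refine Finset.sum_le_sum fun i _ => ?_
  -- per-cell
  by_cases hbad : ∃ y, μ ({ω | Y ω = y} ∩ C i) ≠ 0 ∧ F i y = 0
  · obtain ⟨y, hμy, hFy⟩ := hbad
    have : μ ({ω | Y ω = y} ∩ C i) * negLog (F i y) = ⊤ := by
      rw [negLog, if_pos hFy, ENNReal.mul_top hμy]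
    refine le_trans le_top ?_
    rw [← this]
    exact Finset.single_le_sum (f := fun y => μ ({ω | Y ω = y} ∩ C i) * negLog (F i y))
      (fun _ _ => zero_le) (Finset.mem_univ y)
  · push_neg at hbad
    set P : 𝒴 → ℝ := fun y => (μ ({ω | Y ω = y} ∩ C i)).toReal with hPdef
    set f : 𝒴 → ℝ := fun y => (F i y).toReal with hfdef
    have hFne : ∀ y, F i y ≠ ⊤ := fun y => (PMF.apply_lt_top (F i) y).ne
    have hf1 : ∀ y, f y ≤ 1 := fun y => by
      simpa [hfdef] using ENNReal.toReal_mono (by simp) (PMF.coe_le_one (F i) y)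
    have hμC : (μ (C i)).toReal = ∑ y, P y := by
      rw [measure_eq_sum_fiber μ Y hY (hC i), ENNReal.toReal_sum]
      intro y _; exact measure_ne_top μ _
    have hRHS : ∀ y, μ ({ω | Y ω = y} ∩ C i) * negLog (F i y) =
        ENNReal.ofReal (P y * (-Real.log (f y))) := by
      intro y
      by_cases hμ0 : μ ({ω | Y ω = y} ∩ C i) = 0
      · simp [hμ0, hPdef]
      · have hF0 : F i y ≠ 0 := hbad y hμ0
        rw [negLog, if_neg hF0, ← ENNReal.ofReal_toReal (measure_ne_top μ _),
          ← ENNReal.ofReal_mul ENNReal.toReal_nonneg]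
      -- done
    calc ENNReal.ofReal (∑ y, -(P y * Real.log (P y / (μ (C i)).toReal)))
        ≤ ENNReal.ofReal (∑ y, P y * (-Real.log (f y))) := by
          apply ENNReal.ofReal_le_ofReal
          rw [hμC]
          refine cell_real P f (fun y => ENNReal.toReal_nonneg) (fun y => ENNReal.toReal_nonneg)
            ?_ ?_
          · have : ∑ y, F i y = 1 := by rw [← tsum_fintype (L := SummationFilter.unconditional 𝒴)]; exact (F i).tsum_coe
            rw [← ENNReal.toReal_sum (fun y _ => hFne y)] at *
            simp [hfdef, this]
          · intro y hy
            have hμ0 : μ ({ω | Y ω = y} ∩ C i) ≠ 0 := by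
              intro h; rw [hPdef] at hy; simp [h] at hy
            exact ENNReal.toReal_pos (hbad y hμ0) (hFne y)
      _ = ∑ y, ENNReal.ofReal (P y * (-Real.log (f y))) := by
          refine ENNReal.ofReal_sum_of_nonneg fun y _ => ?_
          have : Real.log (f y) ≤ 0 := Real.log_nonpos ENNReal.toReal_nonneg (hf1 y)
          have := ENNReal.toReal_nonneg (a := μ ({ω | Y ω = y} ∩ C i))
          nlinarith
      _ = ∑ y, μ ({ω | Y ω = y} ∩ C i) * negLog (F i y) := by
          exact Finset.sum_congr rfl fun y _ => (hRHS y).symm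



section helpers

variable {Ω 𝒳 𝒴 𝒵 : Type*} [MeasurableSpace Ω] (μ : Measure Ω) [IsFiniteMeasure μ]
  [Fintype 𝒳] [Nonempty 𝒳] [Fintype 𝒴] [Fintype 𝒵]
  [MeasurableSpace 𝒳] [MeasurableSingletonClass 𝒳]
  [MeasurableSpace 𝒴] [MeasurableSingletonClass 𝒴]
  [MeasurableSpace 𝒵] [MeasurableSingletonClass 𝒵]
  {d : ℕ} (X : Ω → Fin d → 𝒳) (Y : Ω → 𝒴) (Z : Ω → 𝒵)

lemma measSet_X (hX : Measurable X) (x : Fin d → 𝒳) : MeasurableSet {ω | X ω = x} := by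
  have : {ω | X ω = x} = ⋂ j, {ω | X ω j = x j} := by ext ω; simp [funext_iff]
  rw [this]
  exact MeasurableSet.iInter fun j =>
    ((measurable_pi_apply j).comp hX) (measurableSet_singleton (x j))

lemma measSet_mask (hX : Measurable X) (Φ : Finset (Fin d)) (w : { j : Fin d // j ∈ Φ } → 𝒳) :
    MeasurableSet {ω | maskFun X Φ ω = w} := by
  have : {ω | maskFun X Φ ω = w} = ⋂ j : { j : Fin d // j ∈ Φ }, {ω | X ω j.1 = w j} := by
    ext ω; simp [maskFun, funext_iff]
  rw [this]
  exact MeasurableSet.iInter fun j =>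
    ((measurable_pi_apply j.1).comp hX) (measurableSet_singleton (w j))

lemma measSet_Y (hY : Measurable Y) (y : 𝒴) : MeasurableSet {ω | Y ω = y} :=
  hY (measurableSet_singleton y)

lemma measSet_ρ {K : ℕ} (hZ : Measurable Z) (ρ : 𝒵 → Fin K) (k : Fin K) :
    MeasurableSet {ω | ρ (Z ω) = k} :=
  hZ ((Set.to_countable (ρ ⁻¹' {k})).measurableSet)

end helpers

section group
variable {Ω 𝒳 𝒴 𝒵 : Type*} [MeasurableSpace Ω] (μ : Measure Ω) [IsFiniteMeasure μ]
  [Fintype 𝒳] [Nonempty 𝒳] [Fintype 𝒴] [Fintype 𝒵]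
  [MeasurableSpace 𝒳] [MeasurableSingletonClass 𝒳]
  [MeasurableSpace 𝒴] [MeasurableSingletonClass 𝒴]
  [MeasurableSpace 𝒵] [MeasurableSingletonClass 𝒵]
  {d : ℕ} (X : Ω → Fin d → 𝒳) (Y : Ω → 𝒴) (Z : Ω → 𝒵)

/-- factor a mask-dependent classifier through the mask -/
lemma dep_factor (Φ : Finset (Fin d)) (f : (Fin d → 𝒳) → PMF 𝒴)
    (hdep : ∀ x x' : Fin d → 𝒳, (∀ j ∈ Φ, x j = x' j) → f x = f x') :
    ∃ F : ({ j : Fin d // j ∈ Φ } → 𝒳) → PMF 𝒴,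
      ∀ x : Fin d → 𝒳, f x = F (fun j => x j.1) := by
  refine ⟨fun w => f (fun i => if h : i ∈ Φ then w ⟨i, h⟩ else Classical.arbitrary 𝒳),
    fun x => hdep x _ fun j hj => by simp [hj]⟩

/-- regroup a measure over full feature vectors into masked fibers -/
lemma measure_mask_fiber (hX : Measurable X)
    (Φ : Finset (Fin d)) (w : { j : Fin d // j ∈ Φ } → 𝒳) (A : Set Ω) (hA : MeasurableSet A)
    : μ ({ω | maskFun X Φ ω = w} ∩ A) =
      ∑ x : {x : Fin d → 𝒳 // (fun j : { j : Fin d // j ∈ Φ } => x j.1) = w},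
        μ ({ω | X ω = x.1} ∩ A) := by
  have hset : {ω | maskFun X Φ ω = w} ∩ A =
      ⋃ x : {x : Fin d → 𝒳 // (fun j : { j : Fin d // j ∈ Φ } => x j.1) = w},
        ({ω | X ω = x.1} ∩ A) := by
    ext ω
    constructor
    · rintro ⟨h1, h2⟩
      exact Set.mem_iUnion.2 ⟨⟨X ω, h1⟩, rfl, h2⟩
    · rintro h
      obtain ⟨x, hx1, hx2⟩ := Set.mem_iUnion.1 h
      refine ⟨?_, hx2⟩
      simp only [Set.mem_setOf_eq] at hx1 ⊢
      rw [show maskFun X Φ ω = fun j : { j : Fin d // j ∈ Φ } => X ω j.1 from rfl, hx1]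
      exact x.2
  have hd : Pairwise (Function.onFun Disjoint
      (fun x : {x : Fin d → 𝒳 // (fun j : { j : Fin d // j ∈ Φ } => x j.1) = w} =>
        {ω | X ω = x.1} ∩ A)) := by
    intro x x' hxx'
    simp only [Function.onFun, Set.disjoint_left]
    rintro ω ⟨h1, -⟩ ⟨h2, -⟩
    exact hxx' (Subtype.ext (h1.symm.trans h2))
  have hmu := measure_iUnion (μ := μ)
    (f := fun x : {x : Fin d → 𝒳 // (fun j : { j : Fin d // j ∈ Φ } => x j.1) = w} =>
      {ω | X ω = x.1} ∩ A) hd (fun x => (measSet_X X hX x.1).inter hA)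
  rw [hset, hmu, tsum_fintype]

/-- rewrite `ceRisk` as a sum over masked fibers -/
lemma ceRisk_group (hX : Measurable X) (Φ : Finset (Fin d))
    (f : (Fin d → 𝒳) → PMF 𝒴) (F : ({ j : Fin d // j ∈ Φ } → 𝒳) → PMF 𝒴)
    (hF : ∀ x : Fin d → 𝒳, f x = F (fun j => x j.1))
    (hYm : ∀ y, MeasurableSet {ω | Y ω = y}) :
    ceRisk μ X Y f = ∑ w, ∑ y : 𝒴,
      μ ({ω | Y ω = y} ∩ {ω | maskFun X Φ ω = w}) * negLog (F w y) := by
  rw [ceRisk, ← Fintype.sum_fiberwise (fun x : Fin d → 𝒳 => fun j : { j : Fin d // j ∈ Φ } => x j.1)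
    (fun x => ∑ y : 𝒴, μ {ω | X ω = x ∧ Y ω = y} * negLog (f x y))]
  refine Finset.sum_congr rfl fun w _ => ?_
  rw [Finset.sum_comm]
  refine Finset.sum_congr rfl fun y _ => ?_
  have hfx : ∀ x : {x : Fin d → 𝒳 // (fun j : { j : Fin d // j ∈ Φ } => x j.1) = w},
      f x.1 = F w := fun x => by rw [hF x.1, x.2]
  calc ∑ x : {x : Fin d → 𝒳 // _}, μ {ω | X ω = x.1 ∧ Y ω = y} * negLog (f x.1 y)
      = ∑ x : {x : Fin d → 𝒳 // _}, μ ({ω | X ω = x.1} ∩ {ω | Y ω = y}) * negLog (F w y) := by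
        refine Finset.sum_congr rfl fun x _ => by rw [hfx x]; rfl
    _ = (∑ x : {x : Fin d → 𝒳 // _}, μ ({ω | X ω = x.1} ∩ {ω | Y ω = y})) * negLog (F w y) := by
        rw [Finset.sum_mul]
    _ = μ ({ω | Y ω = y} ∩ {ω | maskFun X Φ ω = w}) * negLog (F w y) := by
        rw [Set.inter_comm, measure_mask_fiber μ X hX Φ w _ (hYm y)]

/-- rewrite `ceRiskW` as a sum over masked fibers -/
lemma ceRiskW_group {K : ℕ} (hX : Measurable X) (hZ : Measurable Z)
    (ρ : 𝒵 → Fin K) (k : Fin K) (Φ : Finset (Fin d))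
    (f : (Fin d → 𝒳) → PMF 𝒴) (F : ({ j : Fin d // j ∈ Φ } → 𝒳) → PMF 𝒴)
    (hF : ∀ x : Fin d → 𝒳, f x = F (fun j => x j.1))
    (hYm : ∀ y, MeasurableSet {ω | Y ω = y}) :
    ceRiskW μ X Y Z ρ k f = ∑ w, ∑ y : 𝒴,
      μ ({ω | Y ω = y} ∩ ({ω | ρ (Z ω) = k} ∩ {ω | maskFun X Φ ω = w})) * negLog (F w y) := by
  rw [ceRiskW, ← Fintype.sum_fiberwise (fun x : Fin d → 𝒳 => fun j : { j : Fin d // j ∈ Φ } => x j.1)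
    (fun x => ∑ y : 𝒴, μ {ω | ρ (Z ω) = k ∧ X ω = x ∧ Y ω = y} * negLog (f x y))]
  refine Finset.sum_congr rfl fun w _ => ?_
  rw [Finset.sum_comm]
  refine Finset.sum_congr rfl fun y _ => ?_
  have hfx : ∀ x : {x : Fin d → 𝒳 // (fun j : { j : Fin d // j ∈ Φ } => x j.1) = w},
      f x.1 = F w := fun x => by rw [hF x.1, x.2]
  calc ∑ x : {x : Fin d → 𝒳 // _}, μ {ω | ρ (Z ω) = k ∧ X ω = x.1 ∧ Y ω = y} * negLog (f x.1 y)
      = ∑ x : {x : Fin d → 𝒳 // _},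
          μ ({ω | X ω = x.1} ∩ ({ω | Y ω = y} ∩ {ω | ρ (Z ω) = k})) * negLog (F w y) := by
        refine Finset.sum_congr rfl fun x _ => ?_
        rw [hfx x]
        congr 1
        congr 1
        ext ω; simp only [Set.mem_setOf_eq, Set.mem_inter_iff]; tauto
    _ = (∑ x : {x : Fin d → 𝒳 // _},
          μ ({ω | X ω = x.1} ∩ ({ω | Y ω = y} ∩ {ω | ρ (Z ω) = k}))) * negLog (F w y) := by
        rw [Finset.sum_mul]
    _ = μ ({ω | Y ω = y} ∩ ({ω | ρ (Z ω) = k} ∩ {ω | maskFun X Φ ω = w})) * negLog (F w y) := by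
        rw [← measure_mask_fiber μ X hX Φ w _ ((hYm y).inter (measSet_ρ Z hZ ρ k))]
        have hseteq : {ω | maskFun X Φ ω = w} ∩ ({ω | Y ω = y} ∩ {ω | ρ (Z ω) = k}) =
            {ω | Y ω = y} ∩ ({ω | ρ (Z ω) = k} ∩ {ω | maskFun X Φ ω = w}) := by
          ext ω; simp only [Set.mem_setOf_eq, Set.mem_inter_iff]; tauto
        rw [hseteq]
end group

section applied
variable {Ω 𝒳 𝒴 𝒵 : Type*} [MeasurableSpace Ω] (μ : Measure Ω) [IsFiniteMeasure μ]
  [Fintype 𝒳] [Nonempty 𝒳] [Fintype 𝒴] [Fintype 𝒵]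
  [MeasurableSpace 𝒳] [MeasurableSingletonClass 𝒳]
  [MeasurableSpace 𝒴] [MeasurableSingletonClass 𝒴]
  [MeasurableSpace 𝒵] [MeasurableSingletonClass 𝒵]
  {d : ℕ} (X : Ω → Fin d → 𝒳) (Y : Ω → 𝒴) (Z : Ω → 𝒵)


/-- per-environment contribution to the conditional entropy given `(ρ(Z), X_Φ)` -/
noncomputable def envEnt {K : ℕ} (ρ : 𝒵 → Fin K) (k : Fin K) (Φ : Finset (Fin d)) : ℝ :=
  ∑ w : { j : Fin d // j ∈ Φ } → 𝒳, ∑ y : 𝒴,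
    -((μ ({ω | Y ω = y} ∩ ({ω | ρ (Z ω) = k} ∩ {ω | maskFun X Φ ω = w}))).toReal *
      Real.log ((μ ({ω | Y ω = y} ∩ ({ω | ρ (Z ω) = k} ∩ {ω | maskFun X Φ ω = w}))).toReal /
        (μ ({ω | ρ (Z ω) = k} ∩ {ω | maskFun X Φ ω = w})).toReal))

lemma envEnt_term_nonneg' {p q : ℝ} (hp : 0 ≤ p) (hpq : p ≤ q) :
    0 ≤ -(p * Real.log (p / q)) := by
  rcases eq_or_lt_of_le hp with h0 | hpos
  · simp [← h0]
  · have hq : 0 < q := lt_of_lt_of_le hpos hpq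
    have h1 : p / q ≤ 1 := (div_le_one hq).2 hpq
    have hlog : Real.log (p / q) ≤ 0 := Real.log_nonpos (by positivity) h1
    nlinarith

lemma envEnt_nonneg {K : ℕ} (ρ : 𝒵 → Fin K) (k : Fin K) (Φ : Finset (Fin d)) :
    0 ≤ envEnt μ X Y Z ρ k Φ := by
  refine Finset.sum_nonneg fun w _ => Finset.sum_nonneg fun y _ => ?_
  exact envEnt_term_nonneg' ENNReal.toReal_nonneg
    (ENNReal.toReal_mono (measure_ne_top μ _) (measure_mono Set.inter_subset_right))

lemma condEnt_nonneg {𝒲 : Type*} [Fintype 𝒲] (W : Ω → 𝒲) : 0 ≤ condEnt μ Y W := by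
  refine Finset.sum_nonneg fun w _ => Finset.sum_nonneg fun y _ => ?_
  exact envEnt_term_nonneg' ENNReal.toReal_nonneg
    (ENNReal.toReal_mono (measure_ne_top μ _) (measure_mono fun ω h => h.2))

/-- the per-environment entropies sum to the conditional entropy given the pair -/
lemma sum_envEnt {K : ℕ} (ρ : 𝒵 → Fin K) (Φ : Finset (Fin d)) :
    ∑ k : Fin K, envEnt μ X Y Z ρ k Φ =
      condEnt μ Y (fun ω => (ρ (Z ω), maskFun X Φ ω)) := by
  rw [condEnt, Fintype.sum_prod_type]
  refine Finset.sum_congr rfl fun k _ => Finset.sum_congr rfl fun w _ => ?_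
  refine Finset.sum_congr rfl fun y _ => ?_
  have h1 : {ω | Y ω = y ∧ (ρ (Z ω), maskFun X Φ ω) = (k, w)} =
      {ω | Y ω = y} ∩ ({ω | ρ (Z ω) = k} ∩ {ω | maskFun X Φ ω = w}) := by
    ext ω
    simp only [Set.mem_setOf_eq, Set.mem_inter_iff, Prod.mk.injEq]
  have h2 : {ω | (ρ (Z ω), maskFun X Φ ω) = (k, w)} =
      {ω | ρ (Z ω) = k} ∩ {ω | maskFun X Φ ω = w} := by
    ext ω; simp only [Set.mem_setOf_eq, Set.mem_inter_iff, Prod.mk.injEq]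
  rw [h1, h2]

/-- summing the environment-wise risks recovers the total risk -/
lemma sum_ceRiskW {K : ℕ} (hZ : Measurable Z) (hX : Measurable X) (hY : Measurable Y)
    (ρ : 𝒵 → Fin K) (f : (Fin d → 𝒳) → PMF 𝒴) :
    ∑ k : Fin K, ceRiskW μ X Y Z ρ k f = ceRisk μ X Y f := by
  simp only [ceRiskW, ceRisk]
  rw [Finset.sum_comm]
  refine Finset.sum_congr rfl fun x _ => ?_
  rw [Finset.sum_comm]
  refine Finset.sum_congr rfl fun y _ => ?_
  rw [← Finset.sum_mul]
  congr 1
  have hA : MeasurableSet {ω | X ω = x ∧ Y ω = y} :=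
    (measSet_X X hX x).inter (measSet_Y Y hY y)
  have heq := measure_eq_sum_fiber μ (fun ω => ρ (Z ω)) (fun k => measSet_ρ Z hZ ρ k) hA
  rw [heq]
  exact Finset.sum_congr rfl fun i _ => rfl

/-- Gibbs: the cross-entropy risk of any mask-measurable classifier is at least the
conditional entropy given the masked features. -/
lemma gibbs_risk (hX : Measurable X) (hY : Measurable Y) (Φ : Finset (Fin d))
    (f : (Fin d → 𝒳) → PMF 𝒴)
    (hdep : ∀ x x' : Fin d → 𝒳, (∀ j ∈ Φ, x j = x' j) → f x = f x') :
    ENNReal.ofReal (condEnt μ Y (maskFun X Φ)) ≤ ceRisk μ X Y f := by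
  obtain ⟨F, hF⟩ := dep_factor (𝒳 := 𝒳) Φ f hdep
  rw [ceRisk_group μ X Y hX Φ f F hF (measSet_Y Y hY)]
  have hcells := gibbs_cells μ Y (measSet_Y Y hY)
    (fun w : { j : Fin d // j ∈ Φ } → 𝒳 => {ω | maskFun X Φ ω = w}) (measSet_mask X hX Φ) F
  exact hcells

/-- Gibbs, environment-wise version. -/
lemma gibbs_riskW {K : ℕ} (hX : Measurable X) (hY : Measurable Y) (hZ : Measurable Z)
    (ρ : 𝒵 → Fin K) (k : Fin K) (Φ : Finset (Fin d))
    (f : (Fin d → 𝒳) → PMF 𝒴)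
    (hdep : ∀ x x' : Fin d → 𝒳, (∀ j ∈ Φ, x j = x' j) → f x = f x') :
    ENNReal.ofReal (envEnt μ X Y Z ρ k Φ) ≤ ceRiskW μ X Y Z ρ k f := by
  obtain ⟨F, hF⟩ := dep_factor (𝒳 := 𝒳) Φ f hdep
  rw [ceRiskW_group μ X Y Z hX hZ ρ k Φ f F hF (measSet_Y Y hY)]
  exact gibbs_cells μ Y (measSet_Y Y hY)
    (fun w : { j : Fin d // j ∈ Φ } → 𝒳 => {ω | ρ (Z ω) = k} ∩ {ω | maskFun X Φ ω = w})
    (fun w => (measSet_ρ Z hZ ρ k).inter (measSet_mask X hX Φ w)) F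

end applied

/-- **Proposition 2: violation of Condition 2 makes ZIN include a spurious feature.**
Under Assumptions 1, 3 and 4 and Condition 1, if some spurious feature `j ∉ V` satisfies the
invariance constraint for every environment partition, then for `ε < γ/(2(1 + 2λ))` one has
`L̂(V ∪ {j}) < L̂(V)`; in particular there exists `Φ' ≠ V` with `L̂(Φ') < L̂(V)`. -/
theorem zin_fails_when_condition2_violated
    {Ω 𝒳 𝒴 𝒵 : Type*} [MeasurableSpace Ω] (μ : Measure Ω) [IsProbabilityMeasure μ]
    [Fintype 𝒳] [Nonempty 𝒳] [Fintype 𝒴] [Nonempty 𝒴] [Fintype 𝒵] [Nonempty 𝒵]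
    [MeasurableSpace 𝒳] [MeasurableSingletonClass 𝒳]
    [MeasurableSpace 𝒴] [MeasurableSingletonClass 𝒴]
    [MeasurableSpace 𝒵] [MeasurableSingletonClass 𝒵]
    {d : ℕ} (X : Ω → Fin d → 𝒳) (Y : Ω → 𝒴) (Z : Ω → 𝒵)
    (hX : Measurable X) (hY : Measurable Y) (hZ : Measurable Z)
    (V : Finset (Fin d)) {K : ℕ} (hK : 1 ≤ K)
    (𝓕 : Finset (Fin d) → Set ((Fin d → 𝒳) → PMF 𝒴))
    (h𝓕ne : ∀ Φ, (𝓕 Φ).Nonempty)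
    (h𝓕dep : ∀ Φ, ∀ f ∈ 𝓕 Φ, ∀ x x' : Fin d → 𝒳, (∀ j ∈ Φ, x j = x' j) → f x = f x')
    (lam ε γ : ℝ)
    (hlam0 : 0 ≤ lam) (hε0 : 0 ≤ ε) (hγ0 : 0 < γ)
    -- Assumption 1
    (A1 : ∀ (Φ : Finset (Fin d)) (ρ : 𝒵 → Fin K),
      (∃ f ∈ 𝓕 Φ, ceRisk μ X Y f ≤ ENNReal.ofReal (condEnt μ Y (maskFun X Φ) + ε)) ∧
      (∃ g : Fin K → ((Fin d → 𝒳) → PMF 𝒴), (∀ k, g k ∈ 𝓕 Φ) ∧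
        ∑ k : Fin K, ceRiskW μ X Y Z ρ k (g k) ≤
          ENNReal.ofReal (condEnt μ Y (fun ω => (ρ (Z ω), maskFun X Φ ω)) + ε)))
    -- Assumption 3
    (A3 : ∀ A B : Finset (Fin d), B.Nonempty → Disjoint A B →
      condEnt μ Y (maskFun X (A ∪ B)) ≤ condEnt μ Y (maskFun X A) - γ)
    -- Assumption 4: invariance is preserved under concatenation
    (A4 : ∀ (A B : Finset (Fin d)) (ρ : 𝒵 → Fin K),
      condEnt μ Y (maskFun X A) = condEnt μ Y (fun ω => (ρ (Z ω), maskFun X A ω)) →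
      condEnt μ Y (maskFun X B) = condEnt μ Y (fun ω => (ρ (Z ω), maskFun X B ω)) →
      condEnt μ Y (maskFun X (A ∪ B)) =
        condEnt μ Y (fun ω => (ρ (Z ω), maskFun X (A ∪ B) ω)))
    -- Condition 1: invariance preserving
    (C1 : ∀ ρ : 𝒵 → Fin K,
      condEnt μ Y (fun ω => (ρ (Z ω), maskFun X V ω)) = condEnt μ Y (maskFun X V))
    -- Condition 2 is violated by the spurious feature `j`
    (j : Fin d) (hj : j ∉ V)
    (hjinv : ∀ ρ : 𝒵 → Fin K,
      condEnt μ Y (maskFun X {j}) =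
        condEnt μ Y (fun ω => (ρ (Z ω), maskFun X {j} ω)))
    -- constraint on the constants
    (h1 : ε < γ / (2 * (1 + 2 * lam))) :
    Lhat μ K X Y Z 𝓕 lam (insert j V) < Lhat μ K X Y Z 𝓕 lam V ∧
    ∃ Φ' : Finset (Fin d), Φ' ≠ V ∧
      Lhat μ K X Y Z 𝓕 lam Φ' < Lhat μ K X Y Z 𝓕 lam V := by
  classical
  have k0 : Fin K := ⟨0, hK⟩
  set ρ0 : 𝒵 → Fin K := fun _ => k0 with hρ0
  set Φ' : Finset (Fin d) := insert j V with hΦ'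
  have hUnion : V ∪ {j} = Φ' := by
    rw [hΦ', Finset.insert_eq, Finset.union_comm]
  have hinv : ∀ ρ : 𝒵 → Fin K, condEnt μ Y (maskFun X Φ') =
      condEnt μ Y (fun ω => (ρ (Z ω), maskFun X Φ' ω)) := by
    intro ρ
    have h := A4 V {j} ρ (C1 ρ).symm (hjinv ρ)
    rwa [hUnion] at h
  have hA3' : condEnt μ Y (maskFun X Φ') ≤ condEnt μ Y (maskFun X V) - γ := by
    have h := A3 V {j} (Finset.singleton_nonempty j) (Finset.disjoint_singleton_right.2 hj)
    rwa [hUnion] at h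
  set H' := condEnt μ Y (maskFun X Φ') with hH'
  set HV := condEnt μ Y (maskFun X V) with hHV
  have hH'0 : 0 ≤ H' := condEnt_nonneg μ Y (maskFun X Φ')
  -- upper bound for Lhat Φ'
  obtain ⟨f, hf, hfR⟩ := (A1 Φ' ρ0).1
  have hub : Lhat μ K X Y Z 𝓕 lam Φ' ≤ ENNReal.ofReal (H' + ε + lam * ε) := by
    rw [Lhat]
    refine le_trans (iInf₂_le f hf) (iSup_le fun ρ => ?_)
    have hc : ∀ (k : Fin K) (g : (Fin d → 𝒳) → PMF 𝒴), g ∈ 𝓕 Φ' →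
        ENNReal.ofReal (envEnt μ X Y Z ρ k Φ') ≤ ceRiskW μ X Y Z ρ k g :=
      fun k g hg => gibbs_riskW μ X Y Z hX hY hZ ρ k Φ' g (h𝓕dep Φ' g hg)
    have hpen : ∑ k : Fin K, (ceRiskW μ X Y Z ρ k f - ⨅ g ∈ 𝓕 Φ', ceRiskW μ X Y Z ρ k g)
        ≤ ENNReal.ofReal ε := by
      have step1 : ∀ k : Fin K,
          ceRiskW μ X Y Z ρ k f - (⨅ g ∈ 𝓕 Φ', ceRiskW μ X Y Z ρ k g)
            ≤ ceRiskW μ X Y Z ρ k f - ENNReal.ofReal (envEnt μ X Y Z ρ k Φ') := fun k =>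
        tsub_le_tsub_left (le_iInf₂ fun g hg => hc k g hg) _
      refine le_trans (Finset.sum_le_sum fun k _ => step1 k) ?_
      have hsplit : ∀ k : Fin K,
          (ceRiskW μ X Y Z ρ k f - ENNReal.ofReal (envEnt μ X Y Z ρ k Φ'))
            + ENNReal.ofReal (envEnt μ X Y Z ρ k Φ') = ceRiskW μ X Y Z ρ k f :=
        fun k => tsub_add_cancel_of_le (hc k f hf)
      have hEsum : (∑ k : Fin K, ENNReal.ofReal (envEnt μ X Y Z ρ k Φ'))
          = ENNReal.ofReal H' := by
        rw [← ENNReal.ofReal_sum_of_nonneg (fun k _ => envEnt_nonneg μ X Y Z ρ k Φ'),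
          sum_envEnt μ X Y Z ρ Φ', ← hinv ρ]
      have hsum : (∑ k : Fin K,
          (ceRiskW μ X Y Z ρ k f - ENNReal.ofReal (envEnt μ X Y Z ρ k Φ')))
            + ENNReal.ofReal H' = ceRisk μ X Y f := by
        rw [← hEsum, ← Finset.sum_add_distrib,
          Finset.sum_congr rfl (fun k _ => hsplit k),
          sum_ceRiskW μ X Y Z hZ hX hY ρ f]
      have hle2 : (∑ k : Fin K,
          (ceRiskW μ X Y Z ρ k f - ENNReal.ofReal (envEnt μ X Y Z ρ k Φ')))
            + ENNReal.ofReal H' ≤ ENNReal.ofReal ε + ENNReal.ofReal H' := by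
        rw [hsum]
        refine le_trans hfR (le_of_eq ?_)
        rw [← ENNReal.ofReal_add hε0 hH'0, add_comm ε H']
      exact (ENNReal.add_le_add_iff_right ENNReal.ofReal_ne_top).1 hle2
    calc ceRisk μ X Y f + ENNReal.ofReal lam *
          ∑ k : Fin K, (ceRiskW μ X Y Z ρ k f - ⨅ g ∈ 𝓕 Φ', ceRiskW μ X Y Z ρ k g)
        ≤ ENNReal.ofReal (H' + ε) + ENNReal.ofReal lam * ENNReal.ofReal ε :=
          add_le_add hfR (by gcongr)
      _ = ENNReal.ofReal (H' + ε + lam * ε) := by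
          rw [← ENNReal.ofReal_mul hlam0,
            ← ENNReal.ofReal_add (by linarith) (mul_nonneg hlam0 hε0)]
  -- lower bound for Lhat V
  have hlb : ENNReal.ofReal HV ≤ Lhat μ K X Y Z 𝓕 lam V := by
    rw [Lhat]
    refine le_iInf₂ fun f' hf' => ?_
    refine le_trans ?_ (le_iSup _ ρ0)
    exact le_trans (gibbs_risk μ X Y hX hY V f' (h𝓕dep V f' hf')) (le_add_right le_rfl)
  -- strict comparison of the bounds
  have hstrict : ENNReal.ofReal (H' + ε + lam * ε) < ENNReal.ofReal HV := by
    have hden : (0:ℝ) < 2 * (1 + 2 * lam) := by linarith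
    have h1' : ε * (2 * (1 + 2 * lam)) < γ := (lt_div_iff₀ hden).1 h1
    have hHVlt : H' + ε + lam * ε < HV := by nlinarith
    have hHVpos : 0 < HV := by nlinarith
    exact (ENNReal.ofReal_lt_ofReal_iff hHVpos).2 hHVlt
  have hmain : Lhat μ K X Y Z 𝓕 lam (insert j V) < Lhat μ K X Y Z 𝓕 lam V :=
    lt_of_le_of_lt hub (lt_of_lt_of_le hstrict hlb)
  exact ⟨hmain, insert j V, fun h => hj (h ▸ Finset.mem_insert_self j V), hmain⟩
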